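/- arXiv:2104.06636 — 2 statements merged into one kernel-verified Lean document; each statement's English description precedes it below -/
import Mathlib

section
/- Let H = (V, ℰ) be a β-acyclic hypergraph, let T be a join tree for H, and let S be the family of separators of H with respect to T. Then for any three separators S_1, S_2, S_3 ∈ S, there exists a separator S ∈ S such that (S_1 ∩ S_2) ∪ (S_2 ∩ S_3) ∪ (S_1 ∩ S_3) ⊆ S; consequently, every subfamily of S forms a conformal hypergraph. -/
open SimpleGraph

/-- `T` is a join tree for the hypergraph whose hyperedge family is `E` (indexed by `ι`):
`T` is a tree on the hyperedges and, for every vertex `v`, the hyperedges containing `v`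
induce a connected (nonempty sets being preconnected) subgraph of `T`. -/
def IsJoinTree {V ι : Type*} (E : ι → Finset V) (T : SimpleGraph ι) : Prop :=
  T.IsTree ∧ ∀ v : V, (T.induce {i | v ∈ E i}).Preconnected

/-- A hypergraph is acyclic if it admits a join tree. -/
def IsAcyclicHG {V ι : Type*} (E : ι → Finset V) : Prop :=
  ∃ T : SimpleGraph ι, IsJoinTree E T
/-- A hypergraph is β-acyclic if every (nonempty) subfamily of its hyperedges forms an
acyclic hypergraph. -/
def BetaAcyclic {V ι : Type*} (E : ι → Finset V) : Prop :=
  ∀ s : Set ι, s.Nonempty → IsAcyclicHG fun i : s => E i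
/-- The separator associated to an edge `{a, b}` of a join tree: `E a ∩ E b`. -/
def sepOf {V ι : Type*} [DecidableEq V] (E : ι → Finset V) : Sym2 ι → Finset V :=
  Sym2.lift ⟨fun a b => E a ∩ E b, fun a b => Finset.inter_comm _ _⟩
/-- The 2-section graph of a hypergraph: two distinct vertices are adjacent iff some
hyperedge contains both. -/
def twoSection {V ι : Type*} (E : ι → Finset V) : SimpleGraph V where
  Adj u v := u ≠ v ∧ ∃ i, u ∈ E i ∧ v ∈ E i
  symm := by
    refine ⟨?_⟩
    rintro u v ⟨h, i, hu, hv⟩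
    exact ⟨h.symm, i, hv, hu⟩
  loopless := ⟨fun u h => h.1 rfl⟩
/-- A hypergraph is conformal if every maximal clique of its 2-section graph (on the
vertex set of the hypergraph, i.e. the union of its hyperedges) is contained in some
hyperedge. -/
def ConformalHG {V ι : Type*} (E : ι → Finset V) : Prop :=
  ∀ K : Finset V, K.Nonempty → ↑K ⊆ ⋃ i, (E i : Set V) →
    (twoSection E).IsClique (K : Set V) →
    (∀ K' : Finset V, ↑K' ⊆ ⋃ i, (E i : Set V) →
      (twoSection E).IsClique (K' : Set V) → K ⊆ K' → K' = K) →
    ∃ i, K ⊆ E i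


section Aux
variable {V ι : Type*}

lemma walk_pair_adj {α : Type*} (H : SimpleGraph α) (P : Set α) (u v : α)
    (hP : ∀ w ∈ P, w = u ∨ w = v) :
    ∀ {a b : ↥P}, (H.induce P).Walk a b → a = b ∨ H.Adj u v := by
  intro a b w
  cases w with
  | nil => exact Or.inl rfl
  | @cons _ t _ h p =>
    right
    have hadj : H.Adj ↑a ↑t := h
    rcases hP a a.2 with ha | ha <;> rcases hP t t.2 with ht | ht <;>
      rw [ha, ht] at hadj
    · exact absurd hadj (H.irrefl)
    · exact hadj
    · exact hadj.symm
    · exact absurd hadj (H.irrefl)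

lemma adj_of_pair {α : Type*} (H : SimpleGraph α) (P : Set α) (u v : α)
    (hu : u ∈ P) (hv : v ∈ P) (huv : u ≠ v)
    (hP : ∀ w ∈ P, w = u ∨ w = v)
    (hc : (H.induce P).Preconnected) : H.Adj u v := by
  obtain ⟨w⟩ := hc ⟨u, hu⟩ ⟨v, hv⟩
  rcases walk_pair_adj H P u v hP w with h | h
  · exact absurd (congrArg Subtype.val h) huv
  · exact h

lemma no_join_triangle (E : ι → Finset V) (i₁ i₂ i₃ : ι) (x y z : V)
    (hx1 : x ∉ E i₁) (hx2 : x ∈ E i₂) (hx3 : x ∈ E i₃)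
    (hy1 : y ∈ E i₁) (hy2 : y ∉ E i₂) (hy3 : y ∈ E i₃)
    (hz1 : z ∈ E i₁) (hz2 : z ∈ E i₂) (hz3 : z ∉ E i₃) :
    ¬ IsAcyclicHG (fun i : ({i₁, i₂, i₃} : Set ι) => E ↑i) := by
  rintro ⟨T, hTree, hconn⟩
  have n12 : i₁ ≠ i₂ := fun h => hy2 (h ▸ hy1)
  have n13 : i₁ ≠ i₃ := fun h => hz3 (h ▸ hz1)
  have n23 : i₂ ≠ i₃ := fun h => hy2 (h ▸ hy3)
  have m1 : i₁ ∈ ({i₁, i₂, i₃} : Set ι) := by simp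
  have m2 : i₂ ∈ ({i₁, i₂, i₃} : Set ι) := by simp
  have m3 : i₃ ∈ ({i₁, i₂, i₃} : Set ι) := by simp
  let A : ↥({i₁, i₂, i₃} : Set ι) := ⟨i₁, m1⟩
  let B : ↥({i₁, i₂, i₃} : Set ι) := ⟨i₂, m2⟩
  let C : ↥({i₁, i₂, i₃} : Set ι) := ⟨i₃, m3⟩
  have hAB : A ≠ B := fun h => n12 (congrArg Subtype.val h)
  have hAC : A ≠ C := fun h => n13 (congrArg Subtype.val h)
  have hBC : B ≠ C := fun h => n23 (congrArg Subtype.val h)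
  have memcases : ∀ w : ↥({i₁, i₂, i₃} : Set ι), w.1 = i₁ ∨ w.1 = i₂ ∨ w.1 = i₃ := fun w => w.2
  have adjAB : T.Adj A B := by
    refine adj_of_pair T {j : ↥({i₁, i₂, i₃} : Set ι) | z ∈ E ↑j} A B hz1 hz2 hAB ?_ (hconn z)
    intro w hw
    rcases memcases w with h | h | h
    · exact Or.inl (Subtype.ext h)
    · exact Or.inr (Subtype.ext h)
    · exact absurd (h ▸ hw) hz3
  have adjAC : T.Adj A C := by
    refine adj_of_pair T {j : ↥({i₁, i₂, i₃} : Set ι) | y ∈ E ↑j} A C hy1 hy3 hAC ?_ (hconn y)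
    intro w hw
    rcases memcases w with h | h | h
    · exact Or.inl (Subtype.ext h)
    · exact absurd (h ▸ hw) hy2
    · exact Or.inr (Subtype.ext h)
  have adjBC : T.Adj B C := by
    refine adj_of_pair T {j : ↥({i₁, i₂, i₃} : Set ι) | x ∈ E ↑j} B C hx2 hx3 hBC ?_ (hconn x)
    intro w hw
    rcases memcases w with h | h | h
    · exact absurd (h ▸ hw) hx1
    · exact Or.inl (Subtype.ext h)
    · exact Or.inr (Subtype.ext h)
  obtain ⟨p, -, hun⟩ := hTree.existsUnique_path A B
  have h1 : (Walk.cons adjAB Walk.nil).IsPath := by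
    simp [Walk.cons_isPath_iff, hAB]
  have h2 : (Walk.cons adjAC (Walk.cons adjBC.symm Walk.nil)).IsPath := by
    simp [Walk.cons_isPath_iff, hAB, hAC, hBC, Ne.symm hBC]
  have e1 := hun _ h1
  have e2 := hun _ h2
  have := congrArg Walk.length (e1.trans e2.symm)
  simp [Walk.length] at this

end Aux

lemma key0 {V ι : Type*} [DecidableEq V] (E : ι → Finset V) (hbeta : BetaAcyclic E)
    (a₁ b₁ a₂ b₂ a₃ b₃ : ι) :
    ((E a₂ ∩ E b₂) ∩ (E a₃ ∩ E b₃) ⊆ E a₁ ∩ E b₁) ∨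
    ((E a₁ ∩ E b₁) ∩ (E a₃ ∩ E b₃) ⊆ E a₂ ∩ E b₂) ∨
    ((E a₁ ∩ E b₁) ∩ (E a₂ ∩ E b₂) ⊆ E a₃ ∩ E b₃) := by
  by_contra hcon
  push_neg at hcon
  obtain ⟨h1, h2, h3⟩ := hcon
  obtain ⟨x, hx, hx1⟩ := Finset.not_subset.mp h1
  obtain ⟨y, hy, hy2⟩ := Finset.not_subset.mp h2
  obtain ⟨z, hz, hz3⟩ := Finset.not_subset.mp h3
  simp only [Finset.mem_inter, not_and_or] at hx hy hz hx1 hy2 hz3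
  have hi1 : ∃ i₁, x ∉ E i₁ ∧ y ∈ E i₁ ∧ z ∈ E i₁ := by
    rcases hx1 with h | h
    exacts [⟨a₁, h, hy.1.1, hz.1.1⟩, ⟨b₁, h, hy.1.2, hz.1.2⟩]
  have hi2 : ∃ i₂, y ∉ E i₂ ∧ x ∈ E i₂ ∧ z ∈ E i₂ := by
    rcases hy2 with h | h
    exacts [⟨a₂, h, hx.1.1, hz.2.1⟩, ⟨b₂, h, hx.1.2, hz.2.2⟩]
  have hi3 : ∃ i₃, z ∉ E i₃ ∧ x ∈ E i₃ ∧ y ∈ E i₃ := by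
    rcases hz3 with h | h
    exacts [⟨a₃, h, hx.2.1, hy.2.1⟩, ⟨b₃, h, hx.2.2, hy.2.2⟩]
  obtain ⟨i₁, hxa, hya, hza⟩ := hi1
  obtain ⟨i₂, hyb, hxb, hzb⟩ := hi2
  obtain ⟨i₃, hzc, hxc, hyc⟩ := hi3
  exact no_join_triangle E i₁ i₂ i₃ x y z hxa hxb hxc hya hyb hyc hza hzb hzc
    (hbeta {i₁, i₂, i₃} ⟨i₁, by simp⟩)

lemma key' {V ι : Type*} [DecidableEq V] (E : ι → Finset V) (hbeta : BetaAcyclic E)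
    (e₁ e₂ e₃ : Sym2 ι) : ∃ e, (e = e₁ ∨ e = e₂ ∨ e = e₃) ∧
      (sepOf E e₁ ∩ sepOf E e₂) ∪ (sepOf E e₂ ∩ sepOf E e₃) ∪ (sepOf E e₁ ∩ sepOf E e₃)
        ⊆ sepOf E e := by
  induction e₁ using Sym2.ind with | _ a₁ b₁ =>
  induction e₂ using Sym2.ind with | _ a₂ b₂ =>
  induction e₃ using Sym2.ind with | _ a₃ b₃ =>
  have hsep : ∀ a b : ι, sepOf E s(a, b) = E a ∩ E b := fun a b => rfl
  rcases key0 E hbeta a₁ b₁ a₂ b₂ a₃ b₃ with h | h | h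
  · refine ⟨s(a₁, b₁), Or.inl rfl, ?_⟩
    simp only [hsep]
    exact Finset.union_subset (Finset.union_subset Finset.inter_subset_left h)
      Finset.inter_subset_left
  · refine ⟨s(a₂, b₂), Or.inr (Or.inl rfl), ?_⟩
    simp only [hsep]
    exact Finset.union_subset (Finset.union_subset Finset.inter_subset_right
      Finset.inter_subset_left) h
  · refine ⟨s(a₃, b₃), Or.inr (Or.inr rfl), ?_⟩
    simp only [hsep]
    exact Finset.union_subset (Finset.union_subset h Finset.inter_subset_right)
      Finset.inter_subset_right

lemma gilmore {V κ : Type*} [DecidableEq V] (F : κ → Finset V)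
    (hH : ∀ j₁ j₂ j₃ : κ, ∃ j,
      (F j₁ ∩ F j₂) ∪ (F j₂ ∩ F j₃) ∪ (F j₁ ∩ F j₃) ⊆ F j) :
    ∀ n (K : Finset V), K.card ≤ n → K.Nonempty →
      (∀ v ∈ K, ∃ j, v ∈ F j) →
      (∀ u ∈ K, ∀ v ∈ K, u ≠ v → ∃ j, u ∈ F j ∧ v ∈ F j) →
      ∃ j, K ⊆ F j := by
  intro n
  induction n with
  | zero =>
    intro K hc hne _ _
    exact absurd (Nat.le_antisymm hc (Nat.zero_le _)) (Finset.card_ne_zero_of_mem hne.choose_spec)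
  | succ n ih =>
    intro K hc hne hcov hpair
    have h0 : 0 < K.card := hne.card_pos
    rcases Nat.lt_or_ge K.card 3 with h3 | h3
    · have : K.card = 1 ∨ K.card = 2 := by omega
      rcases this with h | h
      · obtain ⟨v, rfl⟩ := Finset.card_eq_one.mp h
        obtain ⟨j, hj⟩ := hcov v (by simp)
        exact ⟨j, by simp [hj]⟩
      · obtain ⟨u, v, huv, rfl⟩ := Finset.card_eq_two.mp h
        obtain ⟨j, hu, hv⟩ := hpair u (by simp) v (by simp) huv
        exact ⟨j, by simp [Finset.insert_subset_iff, hu, hv]⟩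
    · obtain ⟨a, ha⟩ := hne
      have h2 : 1 < (K.erase a).card := by
        have := Finset.card_erase_of_mem ha; omega
      obtain ⟨b, hb, c, hc, hbc⟩ := Finset.one_lt_card.mp h2
      have hba : b ≠ a := Finset.ne_of_mem_erase hb
      have hca : c ≠ a := Finset.ne_of_mem_erase hc
      have hbK := Finset.mem_of_mem_erase hb
      have hcK := Finset.mem_of_mem_erase hc
      have key : ∀ d ∈ K, ∃ j, K.erase d ⊆ F j := by
        intro d hd
        refine ih (K.erase d) ?_ ?_ ?_ ?_
        · have := Finset.card_erase_of_mem hd; omega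
        · refine Finset.card_pos.mp ?_
          have := Finset.card_erase_of_mem hd; omega
        · exact fun v hv => hcov v (Finset.mem_of_mem_erase hv)
        · exact fun u hu v hv huv =>
            hpair u (Finset.mem_of_mem_erase hu) v (Finset.mem_of_mem_erase hv) huv
      obtain ⟨j₁, hj₁⟩ := key a ha
      obtain ⟨j₂, hj₂⟩ := key b hbK
      obtain ⟨j₃, hj₃⟩ := key c hcK
      obtain ⟨j, hsub⟩ := hH j₁ j₂ j₃
      refine ⟨j, fun w hw => hsub ?_⟩
      have hw1 : w ≠ a → w ∈ F j₁ := fun h => hj₁ (Finset.mem_erase.mpr ⟨h, hw⟩)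
      have hw2 : w ≠ b → w ∈ F j₂ := fun h => hj₂ (Finset.mem_erase.mpr ⟨h, hw⟩)
      have hw3 : w ≠ c → w ∈ F j₃ := fun h => hj₃ (Finset.mem_erase.mpr ⟨h, hw⟩)
      simp only [Finset.mem_union, Finset.mem_inter]
      by_cases hwa : w = a
      · subst hwa
        exact Or.inl (Or.inr ⟨hw2 (Ne.symm hba), hw3 (Ne.symm hca)⟩)
      by_cases hwb : w = b
      · subst hwb
        exact Or.inr ⟨hw1 hba, hw3 hbc⟩
      · exact Or.inl (Or.inl ⟨hw1 hwa, hw2 hwb⟩)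

/-- If `H` is β-acyclic, `T` is a join tree for `H`, and `S` is the
family of separators of `H` with respect to `T`, then for any three separators
`S₁, S₂, S₃ ∈ S` there is a separator `S ∈ S` with
`(S₁ ∩ S₂) ∪ (S₂ ∩ S₃) ∪ (S₁ ∩ S₃) ⊆ S`; consequently every subfamily of `S` forms a
conformal hypergraph. -/
theorem stmt11 {V ι : Type*} [Fintype V] [Fintype ι] [DecidableEq V]
    (E : ι → Finset V)
    (hne : ∀ i, (E i).Nonempty) (hcov : ∀ v, ∃ i, v ∈ E i)
    (hbeta : BetaAcyclic E)
    (T : SimpleGraph ι) (hT : IsJoinTree E T) :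
    (∀ e₁ e₂ e₃ : Sym2 ι, e₁ ∈ T.edgeSet → e₂ ∈ T.edgeSet → e₃ ∈ T.edgeSet →
      ∃ e ∈ T.edgeSet,
        (sepOf E e₁ ∩ sepOf E e₂) ∪ (sepOf E e₂ ∩ sepOf E e₃) ∪ (sepOf E e₁ ∩ sepOf E e₃)
          ⊆ sepOf E e) ∧
      ∀ s : Set (Sym2 ι), s ⊆ T.edgeSet →
        ConformalHG fun e : s => sepOf E (e : Sym2 ι) := by
  constructor
  · intro e₁ e₂ e₃ h1 h2 h3
    obtain ⟨e, he, hsub⟩ := key' E hbeta e₁ e₂ e₃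
    refine ⟨e, ?_, hsub⟩
    rcases he with rfl | rfl | rfl <;> assumption
  · intro s _hs K hKne hKcov hKcl _hmax
    have hH : ∀ j₁ j₂ j₃ : ↥s, ∃ j : ↥s,
        (sepOf E ↑j₁ ∩ sepOf E ↑j₂) ∪ (sepOf E ↑j₂ ∩ sepOf E ↑j₃) ∪
          (sepOf E ↑j₁ ∩ sepOf E ↑j₃) ⊆ sepOf E ↑j := by
      intro j₁ j₂ j₃
      obtain ⟨e, he, hsub⟩ := key' E hbeta ↑j₁ ↑j₂ ↑j₃
      rcases he with rfl | rfl | rfl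
      exacts [⟨j₁, hsub⟩, ⟨j₂, hsub⟩, ⟨j₃, hsub⟩]
    refine gilmore (fun j : ↥s => sepOf E ↑j) hH K.card K le_rfl hKne ?_ ?_
    · intro v hv
      have hm := hKcov (Finset.mem_coe.mpr hv)
      rw [Set.mem_iUnion] at hm
      obtain ⟨i, hi⟩ := hm
      exact ⟨i, hi⟩
    · intro u hu v hv huv
      obtain ⟨-, hj⟩ := hKcl (Finset.mem_coe.mpr hu) (Finset.mem_coe.mpr hv) huv
      exact hj
end

section
/- Let H = (V, ℰ) be an acyclic hypergraph. Then H is γ-acyclic if and only if the line graph of H is isomorphic (under the identity map on ℰ) to the union join graph of H; that is, if and only if for all distinct hyperedges E_i, E_j of H: E_i ∩ E_j ≠ ∅ holds exactly when some join tree of H contains the edge E_iE_j. -/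
open SimpleGraph

/-- A list of vertices forms a path in the hypergraph `E` if each two consecutive
vertices lie in a common hyperedge. -/
def FormsPath {V ι : Type*} (E : ι → Finset V) (p : List V) : Prop :=
  p.Chain' fun a b => ∃ i, a ∈ E i ∧ b ∈ E i

/-- `X` separates `Y` from `Z` in the hypergraph `E`: `X` is nonempty and every sequence
of vertices forming a path in `E` from a vertex of `Y` to a vertex of `Z` contains a
vertex of `X`. -/
def Separates {V ι : Type*} (E : ι → Finset V) (X Y Z : Finset V) : Prop :=
  X.Nonempty ∧ ∀ p : List V, FormsPath E p →
    (∃ y ∈ Y, p.head? = some y) → (∃ z ∈ Z, p.getLast? = some z) →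
    ∃ x ∈ X, x ∈ p
/-- The incidence graph of a hypergraph: the bipartite graph on vertices and hyperedges
where a vertex is adjacent to the hyperedges containing it. -/
def incidenceGraph {V ι : Type*} (E : ι → Finset V) : SimpleGraph (V ⊕ ι) where
  Adj a b :=
    (∃ v i, a = Sum.inl v ∧ b = Sum.inr i ∧ v ∈ E i) ∨
    (∃ v i, a = Sum.inr i ∧ b = Sum.inl v ∧ v ∈ E i)
  symm := by
    refine ⟨?_⟩
    rintro a b (⟨v, i, rfl, rfl, h⟩ | ⟨v, i, rfl, rfl, h⟩)
    · exact Or.inr ⟨v, i, rfl, rfl, h⟩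
    · exact Or.inl ⟨v, i, rfl, rfl, h⟩
  loopless := by
    refine ⟨?_⟩
    rintro a (⟨v, i, rfl, h, -⟩ | ⟨v, i, rfl, h, -⟩) <;> simp at h

/-- A hypergraph is γ-acyclic iff (Fagin's characterization) for all distinct hyperedges
`E_i, E_j` with `E_i ∩ E_j ≠ ∅`, the set `E_i ∩ E_j` separates `E_i \ E_j` from
`E_j \ E_i`. -/
def GammaAcyclic {V ι : Type*} [DecidableEq V] (E : ι → Finset V) : Prop :=
  ∀ i j : ι, i ≠ j → (E i ∩ E j).Nonempty →
    Separates E (E i ∩ E j) (E i \ E j) (E j \ E i)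


section StmtTwelveAux
variable {V ι : Type*}

lemma reach_induce_of_walk {G : SimpleGraph ι} {S : Set ι} {x y : ι} (w : G.Walk x y)
    (hw : ∀ z ∈ w.support, z ∈ S) (hx : x ∈ S) (hy : y ∈ S) :
    (G.induce S).Reachable ⟨x, hx⟩ ⟨y, hy⟩ := by
  induction w with
  | nil => exact Reachable.refl _
  | @cons u v' w' h p ih =>
    have hv' : v' ∈ S := hw v' (by simp [Walk.support_cons])
    have h1 : (G.induce S).Adj ⟨u, hx⟩ ⟨v', hv'⟩ := by
      simp [comap_adj, h]
    refine (h1.reachable).trans (ih ?_ hv' hy)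
    intro z hz; exact hw z (by simp [Walk.support_cons, hz])

lemma walk_of_reach_induce {G : SimpleGraph ι} {S : Set ι} {x y : S}
    (h : (G.induce S).Reachable x y) :
    ∃ w : G.Walk x.1 y.1, ∀ z ∈ w.support, z ∈ S := by
  obtain ⟨w⟩ := h
  induction w with
  | nil => exact ⟨Walk.nil, by simp [x.2]⟩
  | @cons u v' w' h p ih =>
    obtain ⟨w2, hw2⟩ := ih
    have hadj : G.Adj u.1 v'.1 := h
    exact ⟨Walk.cons hadj w2, by
      intro z hz
      rcases (by simpa [Walk.support_cons] using hz : z = u.1 ∨ z ∈ w2.support) with rfl | hz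
      · exact u.2
      · exact hw2 z hz⟩

/-- From a join tree: for a vertex `v` lying in both `E k` and `E l`, there is a `T`-walk
from `k` to `l` all of whose support consists of hyperedges containing `v`. -/
lemma joinwalk {E : ι → Finset V} {T : SimpleGraph ι} (hT : IsJoinTree E T) {v : V} {k l : ι}
    (hk : v ∈ E k) (hl : v ∈ E l) :
    ∃ w : T.Walk k l, ∀ z ∈ w.support, v ∈ E z := by
  have := hT.2 v (⟨k, hk⟩ : {i | v ∈ E i}) ⟨l, hl⟩
  exact walk_of_reach_induce this

lemma tree_bridge {T : SimpleGraph ι} (hT : T.IsTree) {i j : ι} (hadj : T.Adj i j) :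
    ¬ (T.deleteEdges {s(i,j)}).Reachable i j := by
  have hb : T.IsBridge s(i,j) := isAcyclic_iff_forall_adj_isBridge.mp hT.2 hadj
  exact isBridge_iff.mp hb

lemma transfer_del {T : SimpleGraph ι} {x y : ι} (w : T.Walk x y) {e : Sym2 ι}
    (he : e ∉ w.edges) : (T.deleteEdges {e}).Reachable x y := by
  have h : ∀ f ∈ w.edges, f ∈ (T.deleteEdges {e}).edgeSet := by
    intro f hf
    rw [edgeSet_deleteEdges]
    exact ⟨w.edges_subset_edgeSet hf, by rintro rfl; exact he hf⟩
  exact ⟨w.transfer _ h⟩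

/-- If `v` is not in `E i ∩ E j`, then all hyperedges containing `v` lie in one component
of the join tree minus the edge `ij`. -/
lemma same_side {E : ι → Finset V} {T : SimpleGraph ι} (hT : IsJoinTree E T) {i j : ι}
    (hadj : T.Adj i j) {v : V} {k l : ι} (hv : ¬(v ∈ E i ∧ v ∈ E j))
    (hk : v ∈ E k) (hl : v ∈ E l) :
    (T.deleteEdges {s(i,j)}).Reachable k l := by
  obtain ⟨w, hw⟩ := joinwalk hT hk hl
  by_cases he : s(i,j) ∈ w.edges
  · exact absurd ⟨hw i (w.fst_mem_support_of_mem_edges he),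
      hw j (w.snd_mem_support_of_mem_edges he)⟩ hv
  · exact transfer_del w he

/-- In a hypergraph with connected incidence graph, adjacent nodes of a join tree have
intersecting hyperedges. -/
lemma adj_inter_nonempty {E : ι → Finset V} [DecidableEq V] {T : SimpleGraph ι}
    (hconn : (incidenceGraph E).Connected) (hT : IsJoinTree E T) {i j : ι}
    (hadj : T.Adj i j) : (E i ∩ E j).Nonempty := by
  by_contra hemp
  rw [Finset.not_nonempty_iff_eq_empty] at hemp
  have hv : ∀ v : V, ¬(v ∈ E i ∧ v ∈ E j) := by
    intro v ⟨h1, h2⟩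
    have : v ∈ E i ∩ E j := Finset.mem_inter.mpr ⟨h1, h2⟩
    simp [hemp] at this
  set D := T.deleteEdges {s(i,j)} with hD
  set P : V ⊕ ι → Prop := fun x => match x with
    | Sum.inl v => ∀ k, v ∈ E k → D.Reachable i k
    | Sum.inr k => D.Reachable i k with hP
  have step : ∀ x y, (incidenceGraph E).Adj x y → P x → P y := by
    rintro x y (⟨v, k, rfl, rfl, hvk⟩ | ⟨v, k, rfl, rfl, hvk⟩) hx
    · exact hx k hvk
    · intro l hvl
      exact (hx.trans (same_side hT hadj (hv v) hvk hvl))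
  have walkP : ∀ (x y : V ⊕ ι), (incidenceGraph E).Walk x y → P x → P y := by
    intro x y w
    induction w with
    | nil => exact id
    | cons h p ih => exact fun hx => ih (step _ _ h hx)
  obtain ⟨w⟩ := hconn (Sum.inr i) (Sum.inr j)
  have : P (Sum.inr j) := walkP _ _ w (Reachable.refl i)
  exact tree_bridge hT.1 hadj this

/-- If some join tree contains the edge `ij`, then `E i ∩ E j` separates `E i \ E j`
from `E j \ E i`. -/
lemma sep_of_adj [DecidableEq V] {E : ι → Finset V} {T : SimpleGraph ι}
    (hT : IsJoinTree E T) {i j : ι} (hadj : T.Adj i j)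
    (hXne : (E i ∩ E j).Nonempty) :
    Separates E (E i ∩ E j) (E i \ E j) (E j \ E i) := by
  refine ⟨hXne, ?_⟩
  intro p hp hy hz
  by_contra hno
  push_neg at hno
  have hnotin : ∀ x ∈ p, ¬(x ∈ E i ∧ x ∈ E j) := by
    intro x hx hmem
    exact hno x (Finset.mem_inter.mpr hmem) hx
  set D := T.deleteEdges {s(i,j)} with hD
  set Q : V → Prop := fun v => ∀ k, v ∈ E k → D.Reachable i k with hQ
  have main : ∀ (q : List V), FormsPath E q → (∀ x ∈ q, ¬(x ∈ E i ∧ x ∈ E j)) →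
      ∀ a, q.head? = some a → Q a → ∀ b, q.getLast? = some b → Q b := by
    intro q
    induction q with
    | nil => intro _ _ a ha; simp at ha
    | cons u t ih =>
      intro hfp hni a ha hQa b hb
      simp only [List.head?_cons, Option.some.injEq] at ha
      subst ha
      cases t with
      | nil =>
        simp only [List.getLast?_singleton, Option.some.injEq] at hb
        subst hb; exact hQa
      | cons u' t' =>
        have hch := List.isChain_cons_cons.mp hfp
        obtain ⟨⟨m, ham, ha'm⟩, hfp'⟩ := hch
        have hQa' : Q u' := by
          intro l hl
          have h1 : D.Reachable i m := hQa m ham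
          have h2 : D.Reachable m l :=
            same_side hT hadj (hni u' (by simp)) ha'm hl
          exact h1.trans h2
        have hb' : (u' :: t').getLast? = some b := by
          rwa [List.getLast?_cons_cons] at hb
        exact ih hfp' (fun x hx => hni x (List.mem_cons_of_mem _ hx)) u' rfl hQa' b hb'
  obtain ⟨y, hyY, hyh⟩ := hy
  obtain ⟨z, hzZ, hzl⟩ := hz
  have hQy : Q y := by
    intro k hk
    have hyp : y ∈ p := by
      cases p with
      | nil => simp at hyh
      | cons u t => simp only [List.head?_cons, Option.some.injEq] at hyh; subst hyh; simp
    exact same_side hT hadj (hnotin y hyp) (Finset.mem_sdiff.mp hyY).1 hk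
  have hQz : Q z := main p hp hnotin y hyh hQy z hzl
  exact tree_bridge hT.1 hadj (hQz j (Finset.mem_sdiff.mp hzZ).1)

/-- Replace the edge `ab` of `T` by the edge `ac`. -/
def rewire (T : SimpleGraph ι) (a b c : ι) : SimpleGraph ι :=
  T.deleteEdges {s(a,b)} ⊔ fromEdgeSet {s(a,c)}

section RewireLemmas
variable {T : SimpleGraph ι} {a b c : ι}

lemma rewire_adj_ac (hac : a ≠ c) : (rewire T a b c).Adj a c :=
  Or.inr ⟨rfl, hac⟩

lemma rewire_adj_of {x y : ι} (h : T.Adj x y) (hne : s(x,y) ≠ s(a,b)) :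
    (rewire T a b c).Adj x y :=
  Or.inl (by simp only [deleteEdges_adj, Set.mem_singleton_iff]; exact ⟨h, hne⟩)

lemma rewire_edge_mem (hac : a ≠ c) {e : Sym2 ι} :
    e ∈ (rewire T a b c).edgeSet ↔ (e ∈ T.edgeSet ∧ e ≠ s(a,b)) ∨ e = s(a,c) := by
  simp only [rewire, edgeSet_sup, edgeSet_deleteEdges, edgeSet_fromEdgeSet,
    Set.mem_union, Set.mem_diff, Set.mem_singleton_iff, Set.mem_setOf_eq]
  constructor
  · rintro (⟨h1, h2⟩ | ⟨rfl, -⟩)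
    · exact Or.inl ⟨h1, h2⟩
    · exact Or.inr rfl
  · rintro (⟨h1, h2⟩ | rfl)
    · exact Or.inl ⟨h1, h2⟩
    · exact Or.inr ⟨rfl, by simp [Sym2.isDiag_iff_proj_eq, hac]⟩

variable (hab : T.Adj a b) (hbc : T.Adj b c) (hac : a ≠ c) (hnac : ¬T.Adj a c)

include hab hbc hac in
/-- Walk replacement: any walk of `T` gives a walk of the rewired graph, whose support
is contained in the original support, plus possibly `c` if the removed edge was used. -/
lemma rewire_walk {x y : ι} (w : T.Walk x y) :
    ∃ w' : (rewire T a b c).Walk x y,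
      ∀ z ∈ w'.support, z ∈ w.support ∨ (z = c ∧ s(a,b) ∈ w.edges) := by
  induction w with
  | nil => exact ⟨Walk.nil, by simp⟩
  | @cons u u' y' h p ih =>
    obtain ⟨w2, hw2⟩ := ih
    by_cases hcase : s(u,u') = s(a,b)
    · have hmemedge : s(a,b) ∈ (Walk.cons h p).edges := by
        rw [← hcase]; simp [Walk.edges_cons]
      have detour : (rewire T a b c).Adj u c ∧ (rewire T a b c).Adj c u' := by
        rcases Sym2.eq_iff.mp hcase with ⟨hxa, hub⟩ | ⟨hxb, hua⟩
        · subst hxa; subst hub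
          refine ⟨rewire_adj_ac hac, rewire_adj_of hbc.symm ?_⟩
          intro heq
          rcases Sym2.eq_iff.mp heq with ⟨h3, -⟩ | ⟨h3, -⟩
          · exact hac h3.symm
          · exact hbc.ne h3.symm
        · subst hxb; subst hua
          refine ⟨rewire_adj_of hbc ?_, (rewire_adj_ac hac).symm⟩
          intro heq
          rcases Sym2.eq_iff.mp heq with ⟨h3, -⟩ | ⟨-, h3⟩
          · exact hab.ne h3.symm
          · exact hac h3.symm
      refine ⟨Walk.cons detour.1 (Walk.cons detour.2 w2), ?_⟩
      intro z hz
      simp only [Walk.support_cons, List.mem_cons] at hz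
      rcases hz with rfl | rfl | hz
      · exact Or.inl (Walk.start_mem_support _)
      · exact Or.inr ⟨rfl, hmemedge⟩
      · rcases hw2 z hz with h4 | ⟨rfl, hme⟩
        · exact Or.inl (by simp [Walk.support_cons, h4])
        · exact Or.inr ⟨rfl, by simp [Walk.edges_cons, hme]⟩
    · refine ⟨Walk.cons (rewire_adj_of h hcase) w2, ?_⟩
      intro z hz
      simp only [Walk.support_cons, List.mem_cons] at hz
      rcases hz with rfl | hz
      · exact Or.inl (Walk.start_mem_support _)
      · rcases hw2 z hz with h4 | ⟨rfl, hme⟩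
        · exact Or.inl (by simp [Walk.support_cons, h4])
        · exact Or.inr ⟨rfl, by simp [Walk.edges_cons, hme]⟩

include hab hbc hac in
lemma rewire_connected (hT : T.Connected) : (rewire T a b c).Connected := by
  have : Nonempty ι := hT.nonempty
  refine Connected.mk ?_
  intro x y
  obtain ⟨w⟩ := hT x y
  obtain ⟨w', -⟩ := rewire_walk hab hbc hac w
  exact ⟨w'⟩

include hab hbc hac hnac in
lemma rewire_isTree (hT : T.IsTree) : (rewire T a b c).IsTree := by
  classical
  refine ⟨rewire_connected hab hbc hac hT.isConnected, ?_⟩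
  have hbridge : (rewire T a b c).IsBridge s(a,c) := by
    rw [isBridge_iff]
    rintro ⟨w⟩
    have hsub : ∀ e ∈ w.edges, e ∈ T.edgeSet := by
      intro e he
      have h1 : e ∈ (rewire T a b c \ fromEdgeSet {s(a,c)}).edgeSet := w.edges_subset_edgeSet he
      rw [edgeSet_sdiff] at h1
      obtain ⟨h2, h3⟩ := h1
      have h4 : e ≠ s(a,c) := by
        intro heq
        apply h3
        rw [edgeSet_fromEdgeSet, heq]
        exact ⟨rfl, by simp [Sym2.isDiag_iff_proj_eq, hac]⟩
      rcases (rewire_edge_mem hac).mp h2 with ⟨h5, -⟩ | h5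
      · exact h5
      · exact absurd h5 h4
    have hnab : ∀ e ∈ w.edges, e ≠ s(a,b) := by
      intro e he
      have h1 : e ∈ (rewire T a b c \ fromEdgeSet {s(a,c)}).edgeSet := w.edges_subset_edgeSet he
      rw [edgeSet_sdiff] at h1
      rcases (rewire_edge_mem hac).mp h1.1 with ⟨-, h5⟩ | h5
      · exact h5
      · intro heq
        apply h1.2
        rw [edgeSet_fromEdgeSet, h5]
        exact ⟨rfl, by simp [Sym2.isDiag_iff_proj_eq, hac]⟩
    set wT := w.transfer T hsub with hwT
    have hP2path : (Walk.cons hab (Walk.cons hbc Walk.nil)).IsPath := by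
      rw [Walk.isPath_def]
      simp [Walk.support_cons, List.nodup_cons, hab.ne, hac, hbc.ne]
    obtain ⟨pc, -, huniq⟩ := hT.existsUnique_path a c
    have heq1 := huniq wT.bypass (Walk.bypass_isPath wT)
    have heq2 := huniq _ hP2path
    have heqn : wT.bypass = Walk.cons hab (Walk.cons hbc Walk.nil) := heq1.trans heq2.symm
    have hmem : s(a,b) ∈ wT.bypass.edges := by
      rw [heqn]; simp [Walk.edges_cons]
    have hmem2 : s(a,b) ∈ wT.edges := Walk.edges_bypass_subset _ hmem
    rw [Walk.edges_transfer] at hmem2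
    exact hnab _ hmem2 rfl
  intro u cyc hcyc
  by_cases hmem : s(a,c) ∈ cyc.edges
  · exact hbridge.notMem_edges_of_isCycle hcyc hmem
  · have hsub : ∀ e ∈ cyc.edges, e ∈ T.edgeSet := by
      intro e he
      rcases (rewire_edge_mem hac).mp (cyc.edges_subset_edgeSet he) with ⟨h5, -⟩ | h5
      · exact h5
      · exact absurd (h5 ▸ he) hmem
    exact hT.IsAcyclic (cyc.transfer T hsub) (hcyc.transfer hsub)

include hab hbc hac hnac in
lemma rewire_joinTree {E : ι → Finset V} (hT : IsJoinTree E T)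
    (hsub : ∀ v, v ∈ E a → v ∈ E b → v ∈ E c) :
    IsJoinTree E (rewire T a b c) := by
  refine ⟨rewire_isTree hab hbc hac hnac hT.1, ?_⟩
  intro v x y
  obtain ⟨w, hw⟩ := walk_of_reach_induce (hT.2 v x y)
  obtain ⟨w', hw'⟩ := rewire_walk hab hbc hac w
  have hsupp : ∀ z ∈ w'.support, v ∈ E z := by
    intro z hz
    rcases hw' z hz with h1 | ⟨rfl, hme⟩
    · exact hw z h1
    · exact hsub v (hw a (w.fst_mem_support_of_mem_edges hme))
        (hw b (w.snd_mem_support_of_mem_edges hme))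
  exact reach_induce_of_walk w' hsupp (x.2) (y.2)

end RewireLemmas

/-- Main construction: for a γ-acyclic hypergraph, any two distinct intersecting
hyperedges are adjacent in some join tree. -/
lemma exists_adj_tree [DecidableEq V] {E : ι → Finset V} (hga : GammaAcyclic E)
    {i j : ι} (hij : i ≠ j) (hne : (E i ∩ E j).Nonempty) :
    ∀ n (T : SimpleGraph ι), IsJoinTree E T → T.dist i j ≤ n →
      ∃ T', IsJoinTree E T' ∧ T'.Adj i j := by
  intro n
  induction n with
  | zero =>
    intro T hT hd
    exact absurd (hT.1.isConnected.dist_eq_zero_iff.mp (Nat.le_zero.mp hd)) hij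
  | succ n ih =>
    intro T hT hd
    classical
    obtain ⟨w, hw⟩ := hT.1.isConnected.exists_walk_length_eq_dist i j
    obtain ⟨pb, hpb, hpblen⟩ : ∃ pb : T.Walk i j, pb.IsPath ∧ pb.length = T.dist i j :=
      ⟨w.bypass, w.bypass_isPath, le_antisymm (hw ▸ w.length_bypass_le) (dist_le _)⟩
    cases pb with
    | nil => exact absurd rfl hij
    | cons h1 rest =>
      rename_i p1
      cases rest with
      | nil => exact ⟨T, hT, h1⟩
      | cons h2 q2 =>
        rename_i p2
        have hsupp : (Walk.cons h1 (Walk.cons h2 q2)).support = i :: p1 :: q2.support := by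
          simp [Walk.support_cons]
        have hnodup := (Walk.isPath_def _).mp hpb
        rw [hsupp] at hnodup
        have hiq : i ∉ q2.support := by
          have := List.nodup_cons.mp hnodup
          exact fun hmem => this.1 (List.mem_cons_of_mem _ hmem)
        have hp1q : p1 ∉ q2.support := (List.nodup_cons.mp (List.nodup_cons.mp hnodup).2).1
        have hip2 : i ≠ p2 := fun heq => hiq (heq ▸ q2.start_mem_support)
        have hlen2 : q2.length + 2 = T.dist i j := by
          simpa [Walk.length_cons] using hpblen
        have hnadj : ¬T.Adj i p2 := by
          intro hadj
          have := dist_le (Walk.cons hadj q2)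
          simp only [Walk.length_cons] at this
          omega
        have hX12 : ∀ v, v ∈ E i → v ∈ E j → v ∈ E p1 ∧ v ∈ E p2 := by
          intro v hvi hvj
          obtain ⟨w2, hw2⟩ := joinwalk hT hvi hvj
          obtain ⟨pc, -, huniq⟩ := hT.1.existsUnique_path i j
          have heq : w2.bypass = Walk.cons h1 (Walk.cons h2 q2) :=
            (huniq w2.bypass w2.bypass_isPath).trans (huniq _ hpb).symm
          have hmem1 : p1 ∈ w2.support :=
            w2.support_bypass_subset (by rw [heq, hsupp]; simp)
          have hmem2 : p2 ∈ w2.support :=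
            w2.support_bypass_subset (by rw [heq, hsupp]; simp [q2.start_mem_support])
          exact ⟨hw2 _ hmem1, hw2 _ hmem2⟩
        obtain ⟨v0, hv0⟩ := hne
        have hv0i := (Finset.mem_inter.mp hv0).1
        have hv0j := (Finset.mem_inter.mp hv0).2
        have hne2 : (E i ∩ E p2).Nonempty :=
          ⟨v0, Finset.mem_inter.mpr ⟨hv0i, (hX12 v0 hv0i hv0j).2⟩⟩
        have hdich : (∀ v, v ∈ E i → v ∈ E p1 → v ∈ E p2) ∨
            (∀ v, v ∈ E p1 → v ∈ E p2 → v ∈ E i) := by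
          by_contra hcon
          push_neg at hcon
          obtain ⟨⟨va, hvai, hvap1, hvanp2⟩, ⟨vb, hvbp1, hvbp2, hvbni⟩⟩ := hcon
          obtain ⟨-, hsep⟩ := hga i p2 hip2 hne2
          obtain ⟨x, hxmem, hxin⟩ := hsep [va, vb]
            (by
              refine List.isChain_cons_cons.mpr ⟨⟨p1, hvap1, hvbp1⟩, ?_⟩
              simp [List.isChain_singleton])
            ⟨va, Finset.mem_sdiff.mpr ⟨hvai, hvanp2⟩, rfl⟩
            ⟨vb, Finset.mem_sdiff.mpr ⟨hvbp2, hvbni⟩, by simp⟩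
          rcases List.mem_pair.mp hxin with rfl | rfl
          · exact hvanp2 (Finset.mem_inter.mp hxmem).2
          · exact hvbni (Finset.mem_inter.mp hxmem).1
        rcases hdich with hA | hB
        · have hT' := rewire_joinTree h1 h2 hip2 hnadj hT hA
          have hq2e : ∀ e ∈ q2.edges, e ∈ (rewire T i p1 p2).edgeSet := by
            intro e he
            refine (rewire_edge_mem hip2).mpr (Or.inl ⟨q2.edges_subset_edgeSet he, ?_⟩)
            rintro rfl
            exact hiq (q2.fst_mem_support_of_mem_edges he)
          have hwalk : (rewire T i p1 p2).dist i j ≤ n := by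
            have := dist_le (Walk.cons (rewire_adj_ac hip2) (q2.transfer _ hq2e))
            simp only [Walk.length_cons, Walk.length_transfer] at this
            omega
          exact ih _ hT' hwalk
        · have hT' := rewire_joinTree h2.symm h1.symm (Ne.symm hip2)
            (fun h => hnadj h.symm) hT (fun v hv2 hv1 => hB v hv1 hv2)
          have hq2e : ∀ e ∈ q2.edges, e ∈ (rewire T p2 p1 i).edgeSet := by
            intro e he
            refine (rewire_edge_mem (Ne.symm hip2)).mpr
              (Or.inl ⟨q2.edges_subset_edgeSet he, ?_⟩)
            rintro rfl
            exact hp1q (q2.snd_mem_support_of_mem_edges he)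
          have hwalk : (rewire T p2 p1 i).dist i j ≤ n := by
            have := dist_le (Walk.cons (rewire_adj_ac (Ne.symm hip2)).symm
              (q2.transfer _ hq2e))
            simp only [Walk.length_cons, Walk.length_transfer] at this
            omega
          exact ih _ hT' hwalk

end StmtTwelveAux

/-- An acyclic hypergraph `H` (with connected incidence graph, as
assumed throughout the paper) is γ-acyclic iff its line graph is isomorphic, under the
identity on hyperedges, to its union join graph, i.e. iff for all distinct hyperedges
`E_i, E_j`: `E_i ∩ E_j ≠ ∅` holds exactly when some join tree of `H` contains the edge
`E_iE_j`. -/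
theorem stmt12 {V ι : Type*} [Fintype V] [Fintype ι] [DecidableEq V]
    (E : ι → Finset V)
    (hne : ∀ i, (E i).Nonempty) (hcov : ∀ v, ∃ i, v ∈ E i)
    (hconn : (incidenceGraph E).Connected)
    (hacyclic : IsAcyclicHG E) :
    GammaAcyclic E ↔
      ∀ i j : ι, i ≠ j →
        ((E i ∩ E j).Nonempty ↔ ∃ T : SimpleGraph ι, IsJoinTree E T ∧ T.Adj i j) := by
  constructor
  · intro hga i j hij
    constructor
    · intro hne'
      obtain ⟨T, hT⟩ := hacyclic
      exact exists_adj_tree hga hij hne' (T.dist i j) T hT le_rfl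
    · rintro ⟨T, hT, hadj⟩
      exact adj_inter_nonempty hconn hT hadj
  · intro h i j hij hXne
    obtain ⟨T, hT, hadj⟩ := (h i j hij).mp hXne
    exact sep_of_adj hT hadj hXne
end
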